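/- Let G be a digraph with n vertices and m edges and let k ≥ 0. Let G_k be the k-fold directed subdivision of G and let χ(x) = det(x·I_{n+km} − A_{G_k}) be its characteristic polynomial. Then, identically in x, x^{kn} · χ(x) = x^{km} · det(x^{k+1}·I_n − A_G). -/

import Mathlib

open Matrix

noncomputable section
open scoped Classical

namespace SubdivStmt5

/-- The adjacency matrix of the digraph with edge set `E`, tail map `t` and head map `h`. -/
def adjOf {V E : Type*} [Fintype E] (t h : E → V) : Matrix V V ℂ :=
  Matrix.of fun u v => ((Finset.univ.filter fun e => t e = u ∧ h e = v).card : ℂ)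

/-- The adjacency matrix of the `k`-fold directed subdivision of the digraph `(V, E, t, h)`:
each edge `e : u → v` is replaced by the directed path
`u → (e,1) → ⋯ → (e,k) → v` (for `k = 0` the edge is kept). -/
def subdivAdj {V E : Type*} [Fintype E] (t h : E → V) (k : ℕ) :
    Matrix (V ⊕ E × Fin k) (V ⊕ E × Fin k) ℂ :=
  Matrix.of fun i j =>
    match i, j with
    | Sum.inl u, Sum.inl v => if k = 0 then adjOf t h u v else 0
    | Sum.inl u, Sum.inr (e, j) => if t e = u ∧ (j : ℕ) = 0 then 1 else 0
    | Sum.inr (e, j), Sum.inl v => if h e = v ∧ (j : ℕ) + 1 = k then 1 else 0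
    | Sum.inr (e, j), Sum.inr (e', j') => if e = e' ∧ (j' : ℕ) = (j : ℕ) + 1 then 1 else 0

end SubdivStmt5

open SubdivStmt5

section KeyLemma

variable {V E : Type*} [Fintype V] [DecidableEq V] [Fintype E] [DecidableEq E]

private lemma key (t h : E → V) (k : ℕ) (hk : k ≠ 0) (x : ℂ) (hx : x ≠ 0) :
    x ^ (k * Fintype.card V) *
        (x • (1 : Matrix (V ⊕ E × Fin k) (V ⊕ E × Fin k) ℂ) - subdivAdj t h k).det =
      x ^ (k * Fintype.card E) *
        (x ^ (k + 1) • (1 : Matrix V V ℂ) - adjOf t h).det := by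
  have hk' : 0 < k := Nat.pos_of_ne_zero hk
  set B : Matrix V (E × Fin k) ℂ :=
    Matrix.of (fun u p => if t p.1 = u ∧ (p.2 : ℕ) = 0 then 1 else 0) with hB
  set C : Matrix (E × Fin k) V ℂ :=
    Matrix.of (fun p v => if h p.1 = v ∧ (p.2 : ℕ) + 1 = k then 1 else 0) with hC
  set D : Matrix (E × Fin k) (E × Fin k) ℂ :=
    Matrix.of (fun p q => (if p = q then x else 0) -
      (if p.1 = q.1 ∧ (q.2 : ℕ) = (p.2 : ℕ) + 1 then 1 else 0)) with hD
  set W : Matrix (E × Fin k) (E × Fin k) ℂ :=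
    Matrix.of (fun p q => if p.1 = q.1 ∧ (p.2 : ℕ) ≤ (q.2 : ℕ)
      then x⁻¹ ^ ((q.2 : ℕ) - (p.2 : ℕ) + 1) else 0) with hW
  -- block decomposition
  have hM : x • (1 : Matrix (V ⊕ E × Fin k) (V ⊕ E × Fin k) ℂ) - subdivAdj t h k
      = fromBlocks (x • 1) (-B) (-C) D := by
    ext i j
    rcases i with u | ⟨e, j1⟩ <;> rcases j with v | ⟨e', j2⟩ <;>
      simp [subdivAdj, hk, Matrix.one_apply, hB, hC, hD, Prod.ext_iff, mul_ite]
  -- W is a right inverse of D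
  have hDW : D * W = 1 := by
    ext p r
    rw [Matrix.mul_apply]
    have hsplit : ∀ q : E × Fin k, D p q * W q r
        = (if p = q then x * W q r else 0)
          - (if p.1 = q.1 ∧ (q.2 : ℕ) = (p.2 : ℕ) + 1 then W q r else 0) := by
      intro q
      rw [hD]
      simp only [Matrix.of_apply, sub_mul, ite_mul, zero_mul, one_mul]
    rw [Finset.sum_congr rfl fun q _ => hsplit q, Finset.sum_sub_distrib]
    rw [Finset.sum_ite_eq, if_pos (Finset.mem_univ p)]
    have hsum2 : (∑ q : E × Fin k,
        if p.1 = q.1 ∧ (q.2 : ℕ) = (p.2 : ℕ) + 1 then W q r else 0)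
        = if hc : (p.2 : ℕ) + 1 < k then W (p.1, ⟨(p.2 : ℕ) + 1, hc⟩) r else 0 := by
      split_ifs with hc
      · have hiff : ∀ q : E × Fin k,
            (p.1 = q.1 ∧ (q.2 : ℕ) = (p.2 : ℕ) + 1)
              ↔ (p.1, (⟨(p.2 : ℕ) + 1, hc⟩ : Fin k)) = q := by
          intro q
          constructor
          · rintro ⟨h1, h2⟩
            exact Prod.ext_iff.mpr ⟨h1, Fin.ext h2.symm⟩
          · rintro rfl
            exact ⟨rfl, rfl⟩
        simp only [hiff]
        rw [Finset.sum_ite_eq, if_pos (Finset.mem_univ _)]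
      · apply Finset.sum_eq_zero
        rintro ⟨e, j⟩ -
        rw [if_neg]
        rintro ⟨-, hj⟩
        exact hc (hj ▸ j.isLt)
    rw [hsum2, Matrix.one_apply]
    -- pointwise computation
    have hdite : (if hc : (p.2 : ℕ) + 1 < k then W (p.1, ⟨(p.2 : ℕ) + 1, hc⟩) r else 0)
        = if p.1 = r.1 ∧ (p.2 : ℕ) + 1 ≤ (r.2 : ℕ)
          then x⁻¹ ^ ((r.2 : ℕ) - ((p.2 : ℕ) + 1) + 1) else 0 := by
      by_cases hc : (p.2 : ℕ) + 1 < k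
      · rw [dif_pos hc, hW]
        simp only [Matrix.of_apply]
      · rw [dif_neg hc, if_neg]
        rintro ⟨-, hle⟩
        exact hc (lt_of_le_of_lt hle r.2.isLt)
    rw [hdite, hW]
    simp only [Matrix.of_apply]
    by_cases he : p.1 = r.1
    · by_cases h12 : (p.2 : ℕ) = (r.2 : ℕ)
      · have hpr : p = r := Prod.ext he (Fin.ext h12)
        rw [if_pos ⟨he, h12.le⟩, if_neg (fun hcon => by omega), if_pos hpr, h12,
          Nat.sub_self, zero_add, pow_one, mul_inv_cancel₀ hx, sub_zero]
      · have hpr : p ≠ r := fun hcon => h12 (by rw [hcon])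
        rw [if_neg hpr]
        by_cases hlt : (p.2 : ℕ) < (r.2 : ℕ)
        · rw [if_pos ⟨he, hlt.le⟩, if_pos ⟨he, hlt⟩]
          have e1 : (r.2 : ℕ) - (p.2 : ℕ) + 1 = ((r.2 : ℕ) - ((p.2 : ℕ) + 1) + 1) + 1 := by
            omega
          rw [e1, pow_succ, mul_comm x _, mul_assoc, inv_mul_cancel₀ hx, mul_one, sub_self]
        · rw [if_neg (fun hcon => by omega), if_neg (fun hcon => by omega)]
          simp
    · have hpr : p ≠ r := fun hcon => he (by rw [hcon])
      rw [if_neg hpr, if_neg (fun hcon => he hcon.1), if_neg (fun hcon => he hcon.1)]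
      simp
  -- the product W * C
  have hWC : W * C = Matrix.of (fun p v =>
      if h p.1 = v then x⁻¹ ^ (k - (p.2 : ℕ)) else 0) := by
    ext p v
    rw [Matrix.mul_apply, hW, hC]
    simp only [Matrix.of_apply]
    rw [Finset.sum_eq_single (p.1, (⟨k - 1, by omega⟩ : Fin k))]
    · show (if p.1 = p.1 ∧ (p.2 : ℕ) ≤ k - 1 then x⁻¹ ^ (k - 1 - (p.2 : ℕ) + 1) else 0) *
          (if h p.1 = v ∧ (k - 1) + 1 = k then (1 : ℂ) else 0)
        = if h p.1 = v then x⁻¹ ^ (k - (p.2 : ℕ)) else 0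
      have hke : k - 1 + 1 = k := by omega
      have hexp : k - 1 - (p.2 : ℕ) + 1 = k - (p.2 : ℕ) := by have := p.2.isLt; omega
      rw [if_pos ⟨rfl, by have := p.2.isLt; omega⟩, hexp]
      by_cases hv : h p.1 = v
      · rw [if_pos ⟨hv, hke⟩, if_pos hv, mul_one]
      · rw [if_neg (fun hcon => hv hcon.1), if_neg hv, mul_zero]
    · rintro ⟨e, j⟩ - hne
      by_cases h1 : p.1 = e ∧ (p.2 : ℕ) ≤ (j : ℕ)
      · rw [if_pos h1, if_neg, mul_zero]
        rintro ⟨-, hjk⟩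
        have hjk' : (j : ℕ) + 1 = k := hjk
        exact hne (Prod.ext_iff.mpr ⟨h1.1.symm, Fin.ext (show (j : ℕ) = k - 1 by omega)⟩)
      · rw [if_neg h1, zero_mul]
    · intro hcon
      exact absurd (Finset.mem_univ _) hcon
  -- the Schur complement block
  have hadj : ∀ u v, adjOf t h u v = ∑ e : E, if t e = u ∧ h e = v then (1 : ℂ) else 0 := by
    intro u v
    rw [adjOf]
    simp only [Matrix.of_apply]
    rw [Finset.card_filter]
    push_cast
    rfl
  have hBWC : B * (W * C) = (x⁻¹ ^ k) • adjOf t h := by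
    rw [hWC]
    ext u v
    rw [Matrix.mul_apply, hB]
    simp only [Matrix.of_apply, Matrix.smul_apply, smul_eq_mul]
    have hterm : ∀ q : E × Fin k,
        (if t q.1 = u ∧ (q.2 : ℕ) = 0 then (1 : ℂ) else 0) *
          (if h q.1 = v then x⁻¹ ^ (k - (q.2 : ℕ)) else 0)
        = if q.2 = (⟨0, hk'⟩ : Fin k) then
            (if t q.1 = u ∧ h q.1 = v then x⁻¹ ^ k else 0) else 0 := by
      rintro ⟨e, j⟩
      have hj0 : (j = (⟨0, hk'⟩ : Fin k)) ↔ (j : ℕ) = 0 := by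
        rw [Fin.ext_iff]
      by_cases hj : (j : ℕ) = 0 <;>
        by_cases h1 : t e = u <;> by_cases h2 : h e = v <;>
          simp [hj, h1, h2, hj0]
    rw [Finset.sum_congr rfl fun q _ => hterm q, Fintype.sum_prod_type]
    simp only [Finset.sum_ite_eq', Finset.mem_univ, if_true]
    rw [hadj u v, Finset.mul_sum]
    exact Finset.sum_congr rfl fun e _ => by
      by_cases h1 : t e = u ∧ h e = v <;> simp [h1]
  -- determinant of D
  have hdetD : D.det = x ^ (k * Fintype.card E) := by
    have hinj : Function.Injective
        (fun p : E × Fin k => ((Fintype.equivFin E p.1 : ℕ)) * k + (p.2 : ℕ)) := by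
      rintro ⟨a, i⟩ ⟨b, j⟩ hab
      simp only at hab
      have hij : (i : ℕ) = (j : ℕ) := by
        have h1 : (k * (Fintype.equivFin E a : ℕ) + (i : ℕ)) % k
            = (k * (Fintype.equivFin E b : ℕ) + (j : ℕ)) % k := by
          rw [Nat.mul_comm k, Nat.mul_comm k, hab]
        rwa [Nat.mul_add_mod, Nat.mul_add_mod, Nat.mod_eq_of_lt i.isLt,
          Nat.mod_eq_of_lt j.isLt] at h1
      have hab2 : ((Fintype.equivFin E a : ℕ)) * k = ((Fintype.equivFin E b : ℕ)) * k := by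
        omega
      have hEab : a = b := by
        have := Nat.eq_of_mul_eq_mul_right hk' hab2
        exact (Fintype.equivFin E).injective (Fin.ext this)
      exact Prod.ext hEab (Fin.ext hij)
    letI : LinearOrder (E × Fin k) := LinearOrder.lift' _ hinj
    have htri : D.BlockTriangular id := by
      intro a b hab
      have hflt : ((Fintype.equivFin E b.1 : ℕ)) * k + (b.2 : ℕ)
          < ((Fintype.equivFin E a.1 : ℕ)) * k + (a.2 : ℕ) := hab
      rw [hD]
      simp only [Matrix.of_apply]
      rw [if_neg, if_neg, sub_zero]
      · rintro ⟨h1, h2⟩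
        rw [h1] at hflt
        omega
      · rintro rfl
        exact lt_irrefl _ hflt
    rw [Matrix.det_of_upperTriangular htri]
    have hdiag : ∀ p : E × Fin k, D p p = x := by
      intro p
      rw [hD]
      have hne2 : ¬((p.2 : ℕ) = (p.2 : ℕ) + 1) := by omega
      simp [hne2]
    rw [Finset.prod_congr rfl fun p _ => hdiag p, Finset.prod_const, Finset.card_univ,
      Fintype.card_prod, Fintype.card_fin, mul_comm]
  -- assemble
  letI : Invertible D := invertibleOfRightInverse D W hDW
  have hinv : ⅟ D = W := invOf_eq_right_inv hDW
  rw [hM, Matrix.det_fromBlocks₂₂, hinv]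
  have hschur : x • (1 : Matrix V V ℂ) - (-B) * W * (-C)
      = (x⁻¹ ^ k) • (x ^ (k + 1) • (1 : Matrix V V ℂ) - adjOf t h) := by
    simp only [Matrix.neg_mul, Matrix.mul_neg, neg_neg]
    rw [Matrix.mul_assoc, hBWC]
    rw [smul_sub, smul_smul]
    congr 2
    field_simp [pow_succ]
    rw [one_div, pow_succ, ← mul_assoc, ← mul_pow, inv_mul_cancel₀ hx, one_pow, one_mul]
  rw [hschur, hdetD, Matrix.det_smul]
  have hxk : (x⁻¹ ^ k) ^ Fintype.card V = (x ^ (k * Fintype.card V))⁻¹ := by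
    rw [← pow_mul, inv_pow]
  rw [hxk]
  have hne3 : x ^ (k * Fintype.card V) ≠ 0 := pow_ne_zero _ hx
  field_simp

end KeyLemma

/-- The characteristic polynomial of the `k`-fold directed subdivision:
`x^{kn} · χ(x) = x^{km} · det(x^{k+1}·I_n − A_G)`. -/
theorem stmt_5 {V E : Type*} [Fintype V] [DecidableEq V] [Fintype E] [DecidableEq E]
    (t h : E → V) (k : ℕ) (x : ℂ) :
    x ^ (k * Fintype.card V) *
        (x • (1 : Matrix (V ⊕ E × Fin k) (V ⊕ E × Fin k) ℂ) - subdivAdj t h k).det =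
      x ^ (k * Fintype.card E) *
        (x ^ (k + 1) • (1 : Matrix V V ℂ) - adjOf t h).det := by
  rcases Nat.eq_zero_or_pos k with rfl | hk
  · simp only [Nat.zero_mul, pow_zero, one_mul, Nat.zero_add, pow_one]
    rw [← Matrix.det_submatrix_equiv_self (Equiv.sumEmpty V (E × Fin 0)).symm]
    congr 1
    ext u v
    simp [subdivAdj, Matrix.one_apply]
  · have hk0 : k ≠ 0 := hk.ne'
    have hcont1 : Continuous fun y : ℂ => y ^ (k * Fintype.card V) *
        (y • (1 : Matrix (V ⊕ E × Fin k) (V ⊕ E × Fin k) ℂ) - subdivAdj t h k).det :=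
      (continuous_pow _).mul
        (Continuous.matrix_det ((continuous_id.smul continuous_const).sub continuous_const))
    have hcont2 : Continuous fun y : ℂ => y ^ (k * Fintype.card E) *
        (y ^ (k + 1) • (1 : Matrix V V ℂ) - adjOf t h).det :=
      (continuous_pow _).mul
        (Continuous.matrix_det (((continuous_pow (k + 1)).smul continuous_const).sub
          continuous_const))
    have heq := Continuous.ext_on (dense_compl_singleton (0 : ℂ)) hcont1 hcont2
      (fun y hy => key t h k hk0 y (Set.mem_compl_singleton_iff.mp hy))
    exact congrFun heq x
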